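/- For the induction motor model with drift a(x) = ω e_θ + (μψ_d I_q − τ_L/J) e_ω + (−ηψ_d + ηM I_d) e_{ψ_d} + (n_pω + ηM I_q/ψ_d) e_ρ, one has [e_ω, a](x) = e_θ + n_p e_ρ at every point with ψ_d ≠ 0, and consequently the six vectors e_{I_d}, e_{I_q}, e_{ψ_d}, e_ω, e_ρ, [e_ω, a](x) span ℝ⁶ at every such point; i.e., G₁ = D̄₂ + [a, D̄₂] equals the whole tangent space. -/

import Mathlib

/-- The i-th standard basis vector of ℝ⁶; coordinates are ordered
`(θ, ω, ψ_d, ρ, I_d, I_q)`. -/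
noncomputable def e (i : Fin 6) : Fin 6 → ℝ := Pi.single i 1

/-- Drift of the induction motor model:
`a(x) = ω e_θ + (μψ_d I_q − τ_L/J) e_ω + (−ηψ_d + ηM I_d) e_{ψ_d} + (n_pω + ηM I_q/ψ_d) e_ρ`. -/
noncomputable def motorDrift (μ η M np τL J : ℝ) : (Fin 6 → ℝ) → (Fin 6 → ℝ) :=
  fun x => x 1 • e 0 + (μ * x 2 * x 5 - τL / J) • e 1 +
    (-(η * x 2) + η * M * x 4) • e 2 + (np * x 1 + η * M * x 5 / x 2) • e 3

/-- The Lie bracket computation. -/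
theorem bracket_aux (μ η M np τL J : ℝ) (x : Fin 6 → ℝ) (hψ : x 2 ≠ 0) :
    VectorField.lieBracket ℝ (fun _ => e 1) (motorDrift μ η M np τL J) x = e 0 + np • e 3 := by
  have hp := fun i : Fin 6 => hasFDerivAt_apply (𝕜 := ℝ) (F' := fun _ : Fin 6 => ℝ) i x
  have hinv : HasFDerivAt (fun y : Fin 6 → ℝ => (y 2)⁻¹)
      ((-(ContinuousLinearMap.mulLeftRight ℝ ℝ (x 2)⁻¹ (x 2)⁻¹)).comp
        (ContinuousLinearMap.proj 2)) x :=
    (hasFDerivAt_inv' hψ).comp x (hp 2)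
  have ha0 := ((((hp 1).smul_const (e 0)).add
      (((((hp 2).const_mul μ).mul (hp 5)).sub_const (τL / J)).smul_const (e 1))).add
      ((((hp 2).const_mul η).neg.add ((hp 4).const_mul (η * M))).smul_const (e 2))).add
      ((((hp 1).const_mul np).add (((hp 5).const_mul (η * M)).mul hinv)).smul_const (e 3))
  have heq : motorDrift μ η M np τL J =ᶠ[nhds x] (fun y : Fin 6 → ℝ =>
      y 1 • e 0 + (μ * y 2 * y 5 - τL / J) • e 1 + (-(η * y 2) + η * M * y 4) • e 2 +
        (np * y 1 + η * M * y 5 * (y 2)⁻¹) • e 3) :=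
    Filter.Eventually.of_forall (fun y => by simp [motorDrift, div_eq_mul_inv])
  have ha := ha0.congr_of_eventuallyEq heq
  have hfd := ha.fderiv
  rw [VectorField.lieBracket, hfd, fderiv_fun_const]
  simp only [ContinuousLinearMap.add_apply, ContinuousLinearMap.smulRight_apply,
    ContinuousLinearMap.smul_apply, ContinuousLinearMap.coe_smul', ContinuousLinearMap.neg_apply,
    ContinuousLinearMap.comp_apply, ContinuousLinearMap.proj_apply, ContinuousLinearMap.zero_apply,
    Pi.zero_apply, Pi.smul_apply]
  have h1 : e 1 1 = 1 := by simp [e]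
  have h2 : e 1 2 = 0 := by simp [e, Pi.single_apply]
  have h5 : e 1 5 = 0 := by simp [e, Pi.single_apply]
  have h4 : e 1 4 = 0 := by simp [e, Pi.single_apply]
  rw [h1, h2, h5, h4]
  simp

/-- The span computation. -/
theorem span_aux (np : ℝ) :
    Submodule.span ℝ ({e 4, e 5, e 2, e 1, e 3, e 0 + np • e 3} : Set (Fin 6 → ℝ)) = ⊤ := by
  rw [eq_top_iff, ← (Pi.basisFun ℝ (Fin 6)).span_eq, Submodule.span_le]
  rintro v ⟨i, rfl⟩
  have hb : ∀ j : Fin 6, (Pi.basisFun ℝ (Fin 6)) j = e j := by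
    intro j; simp [e, Pi.basisFun_apply]
  rw [hb]
  fin_cases i
  · have h3 : e 3 ∈ Submodule.span ℝ ({e 4, e 5, e 2, e 1, e 3, e 0 + np • e 3} : Set (Fin 6 → ℝ)) :=
      Submodule.subset_span (by simp)
    have h03 : e 0 + np • e 3 ∈ Submodule.span ℝ
        ({e 4, e 5, e 2, e 1, e 3, e 0 + np • e 3} : Set (Fin 6 → ℝ)) :=
      Submodule.subset_span (by simp)
    have := Submodule.sub_mem _ h03 (Submodule.smul_mem _ np h3)
    simpa using this
  all_goals exact Submodule.subset_span (by simp)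

/-- For the induction motor, `[e_ω, a](x) = e_θ + n_p e_ρ` at every point with `ψ_d ≠ 0`, and
consequently `e_{I_d}, e_{I_q}, e_{ψ_d}, e_ω, e_ρ, [e_ω, a](x)` span ℝ⁶ at every such point;
i.e. `G₁ = D̄₂ + [a, D̄₂]` equals the whole tangent space. -/
theorem stmt10 (μ η M np τL J : ℝ) (hJ : J ≠ 0) (x : Fin 6 → ℝ) (hψ : x 2 ≠ 0) :
    VectorField.lieBracket ℝ (fun _ => e 1) (motorDrift μ η M np τL J) x = e 0 + np • e 3 ∧
    Submodule.span ℝ ({e 4, e 5, e 2, e 1, e 3,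
      VectorField.lieBracket ℝ (fun _ => e 1) (motorDrift μ η M np τL J) x} :
        Set (Fin 6 → ℝ)) = ⊤ := by
  have hb := bracket_aux μ η M np τL J x hψ
  refine ⟨hb, ?_⟩
  rw [hb]
  exact span_aux np
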